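/- There do not exist odd integers d₁ ≥ d₂ ≥ d₃ ≥ d₄ ≥ d₅ ≥ d₆, each strictly greater than 1, such that dᵢ² divides N := 1 + 2(d₁² + d₂² + d₃² + d₄² + d₅² + d₆²) for every i = 1, …, 6. -/

import Mathlib

lemma aux_nat (p k a b : ℕ) (hp : p.Prime) (h5 : ¬ p ∣ 5) (hk : ¬ p ∣ k) (hk0 : k ≠ 0)
    (ha : a ≠ 0) (hb : b ≠ 0) : 5 * a ^ 2 ≠ p * k * b ^ 2 := by
  intro h
  have := congrArg (fun n => n.factorization p) h
  simp [Nat.factorization_mul, Nat.factorization_pow, hp.factorization_self,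
    Nat.factorization_eq_zero_of_not_dvd h5, Nat.factorization_eq_zero_of_not_dvd hk,
    ha, hb, hp.ne_zero, hk0, mul_ne_zero] at this
  omega

lemma aux_int (p k : ℕ) (hp : p.Prime) (h5 : ¬ p ∣ 5) (hk : ¬ p ∣ k) (hk0 : k ≠ 0)
    (d e : ℤ) (hd : d ≠ 0) (he : e ≠ 0) (h : 5 * d ^ 2 = (p * k : ℕ) * e ^ 2) : False := by
  apply aux_nat p k d.natAbs e.natAbs hp h5 hk hk0 (Int.natAbs_ne_zero.mpr hd)
    (Int.natAbs_ne_zero.mpr he)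
  have := congrArg Int.natAbs h
  simpa [Int.natAbs_mul, Int.natAbs_pow] using this

lemma odd_sq (d : ℤ) (h : Odd d) : ∃ m, d ^ 2 = 8 * m + 1 := by
  obtain ⟨k, rfl⟩ := h
  obtain ⟨m, hm⟩ := Int.even_mul_succ_self k
  exact ⟨m, by linear_combination 4 * hm⟩

lemma sq_ge_nine (d : ℤ) (h : 3 ≤ d) : 9 ≤ d ^ 2 := by nlinarith

lemma sq_mono (a b : ℤ) (h0 : 0 ≤ a) (h : a ≤ b) : a ^ 2 ≤ b ^ 2 :=
  pow_le_pow_left₀ h0 h 2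

lemma quot_gt (e q a : ℤ) (he : 0 < e) (h : a * e < e * q) : a < q := by
  have h' : e * a < e * q := by linarith
  exact (mul_lt_mul_iff_right₀ he).mp h'

lemma quot_ge (e q a : ℤ) (he : 0 < e) (h : a * e ≤ e * q) : a ≤ q := by
  have h' : e * a ≤ e * q := by linarith
  exact (mul_le_mul_iff_right₀ he).mp h'

lemma quot_lt (e q a : ℤ) (he : 0 < e) (h : e * q < a * e) : q < a := by
  have h' : e * q < e * a := by linarith
  exact (mul_lt_mul_iff_right₀ he).mp h'

theorem no_rank13_perfect_dims (d₁ d₂ d₃ d₄ d₅ d₆ : ℤ) :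
    ¬ (Odd d₁ ∧ Odd d₂ ∧ Odd d₃ ∧ Odd d₄ ∧ Odd d₅ ∧ Odd d₆ ∧
       d₁ ≥ d₂ ∧ d₂ ≥ d₃ ∧ d₃ ≥ d₄ ∧ d₄ ≥ d₅ ∧ d₅ ≥ d₆ ∧
       1 < d₁ ∧ 1 < d₂ ∧ 1 < d₃ ∧ 1 < d₄ ∧ 1 < d₅ ∧ 1 < d₆ ∧
       d₁ ^ 2 ∣ 1 + 2 * (d₁ ^ 2 + d₂ ^ 2 + d₃ ^ 2 + d₄ ^ 2 + d₅ ^ 2 + d₆ ^ 2) ∧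
       d₂ ^ 2 ∣ 1 + 2 * (d₁ ^ 2 + d₂ ^ 2 + d₃ ^ 2 + d₄ ^ 2 + d₅ ^ 2 + d₆ ^ 2) ∧
       d₃ ^ 2 ∣ 1 + 2 * (d₁ ^ 2 + d₂ ^ 2 + d₃ ^ 2 + d₄ ^ 2 + d₅ ^ 2 + d₆ ^ 2) ∧
       d₄ ^ 2 ∣ 1 + 2 * (d₁ ^ 2 + d₂ ^ 2 + d₃ ^ 2 + d₄ ^ 2 + d₅ ^ 2 + d₆ ^ 2) ∧
       d₅ ^ 2 ∣ 1 + 2 * (d₁ ^ 2 + d₂ ^ 2 + d₃ ^ 2 + d₄ ^ 2 + d₅ ^ 2 + d₆ ^ 2) ∧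
       d₆ ^ 2 ∣ 1 + 2 * (d₁ ^ 2 + d₂ ^ 2 + d₃ ^ 2 + d₄ ^ 2 + d₅ ^ 2 + d₆ ^ 2)) := by
  rintro ⟨o1, o2, o3, o4, o5, o6, h12, h23, h34, h45, h56, g1, g2, g3, g4, g5, g6,
    v1, v2, v3, v4, v5, v6⟩
  obtain ⟨m₁, hm₁⟩ := odd_sq d₁ o1
  obtain ⟨m₂, hm₂⟩ := odd_sq d₂ o2
  obtain ⟨m₃, hm₃⟩ := odd_sq d₃ o3
  obtain ⟨m₄, hm₄⟩ := odd_sq d₄ o4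
  obtain ⟨m₅, hm₅⟩ := odd_sq d₅ o5
  obtain ⟨m₆, hm₆⟩ := odd_sq d₆ o6
  have t1 : 3 ≤ d₁ := by obtain ⟨k, hk⟩ := o1; omega
  have t2 : 3 ≤ d₂ := by obtain ⟨k, hk⟩ := o2; omega
  have t3 : 3 ≤ d₃ := by obtain ⟨k, hk⟩ := o3; omega
  have t4 : 3 ≤ d₄ := by obtain ⟨k, hk⟩ := o4; omega
  have t5 : 3 ≤ d₅ := by obtain ⟨k, hk⟩ := o5; omega
  have t6 : 3 ≤ d₆ := by obtain ⟨k, hk⟩ := o6; omega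
  have s1 : 9 ≤ d₁ ^ 2 := sq_ge_nine d₁ t1
  have s2 : 9 ≤ d₂ ^ 2 := sq_ge_nine d₂ t2
  have s3 : 9 ≤ d₃ ^ 2 := sq_ge_nine d₃ t3
  have s4 : 9 ≤ d₄ ^ 2 := sq_ge_nine d₄ t4
  have s5 : 9 ≤ d₅ ^ 2 := sq_ge_nine d₅ t5
  have s6 : 9 ≤ d₆ ^ 2 := sq_ge_nine d₆ t6
  have e12 : d₂ ^ 2 ≤ d₁ ^ 2 := sq_mono d₂ d₁ (by linarith) h12
  have e23 : d₃ ^ 2 ≤ d₂ ^ 2 := sq_mono d₃ d₂ (by linarith) h23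
  have e34 : d₄ ^ 2 ≤ d₃ ^ 2 := sq_mono d₄ d₃ (by linarith) h34
  have e45 : d₅ ^ 2 ≤ d₄ ^ 2 := sq_mono d₅ d₄ (by linarith) h45
  have e56 : d₆ ^ 2 ≤ d₅ ^ 2 := sq_mono d₆ d₅ (by linarith) h56
  set N : ℤ := 1 + 2 * (d₁ ^ 2 + d₂ ^ 2 + d₃ ^ 2 + d₄ ^ 2 + d₅ ^ 2 + d₆ ^ 2) with hN
  have hmod : N = 16 * (m₁ + m₂ + m₃ + m₄ + m₅ + m₆) + 13 := by
    rw [hN, hm₁, hm₂, hm₃, hm₄, hm₅, hm₆]; ring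
  -- Step 1 : N = 5 * d₁ ^ 2
  obtain ⟨q₁, hq₁⟩ := v1
  have hq₁5 : q₁ = 5 := by
    have hNq : N = 8 * (m₁ * q₁) + q₁ := by rw [hq₁, hm₁]; ring
    have hlow : 2 * d₁ ^ 2 < N := by rw [hN]; linarith
    have hhigh : N < 13 * d₁ ^ 2 := by rw [hN]; linarith
    have hql : 2 < q₁ := quot_gt (d₁^2) q₁ 2 (by linarith) (by rw [← hq₁]; exact hlow)
    have hqh : q₁ < 13 := quot_lt (d₁^2) q₁ 13 (by linarith) (by rw [← hq₁]; exact hhigh)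
    omega
  rw [hq₁5] at hq₁
  -- Step 2 : d₂ ^ 2 = d₁ ^ 2
  obtain ⟨q₂, hq₂⟩ := v2
  have key2 : 3 * d₁ ^ 2 = 1 + 2 * (d₂ ^ 2 + d₃ ^ 2 + d₄ ^ 2 + d₅ ^ 2 + d₆ ^ 2) := by
    have h := hq₁; rw [hN] at h; linarith
  have hq₂5 : q₂ = 5 ∨ q₂ = 13 := by
    have hNq : N = 8 * (m₂ * q₂) + q₂ := by rw [hq₂, hm₂]; ring
    have hlow : 5 * d₂ ^ 2 ≤ N := by linarith [hq₁]
    have hhigh : N < 17 * d₂ ^ 2 := by linarith [hq₁, key2]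
    have hql : 5 ≤ q₂ := quot_ge (d₂^2) q₂ 5 (by linarith) (by rw [← hq₂]; exact hlow)
    have hqh : q₂ < 17 := quot_lt (d₂^2) q₂ 17 (by linarith) (by rw [← hq₂]; exact hhigh)
    omega
  have hd2 : d₂ ^ 2 = d₁ ^ 2 := by
    rcases hq₂5 with h | h
    · rw [h] at hq₂; linarith [hq₁, hq₂]
    · exfalso
      rw [h] at hq₂
      refine aux_int 13 1 (by norm_num) (by norm_num) (by norm_num) (by norm_num)
        d₁ d₂ (by linarith) (by linarith) ?_
      push_cast
      linarith [hq₁, hq₂]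
  -- Step 3 : d₁ ^ 2 = 1 + 2 * (d₃² + d₄² + d₅² + d₆²), then contradiction
  have key3 : d₁ ^ 2 = 1 + 2 * (d₃ ^ 2 + d₄ ^ 2 + d₅ ^ 2 + d₆ ^ 2) := by
    rw [hd2] at key2; linarith
  obtain ⟨q₃, hq₃⟩ := v3
  have hq₃cases : q₃ = 13 ∨ q₃ = 21 ∨ q₃ = 29 ∨ q₃ = 37 := by
    have hNq : N = 8 * (m₃ * q₃) + q₃ := by rw [hq₃, hm₃]; ring
    have hlow : 10 * d₃ ^ 2 < N := by linarith [hq₁, key3]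
    have hhigh : N < 41 * d₃ ^ 2 := by linarith [hq₁, key3]
    have hql : 10 < q₃ := quot_gt (d₃^2) q₃ 10 (by linarith) (by rw [← hq₃]; exact hlow)
    have hqh : q₃ < 41 := quot_lt (d₃^2) q₃ 41 (by linarith) (by rw [← hq₃]; exact hhigh)
    omega
  have hd1 : d₁ ≠ 0 := by linarith
  have hd3 : d₃ ≠ 0 := by linarith
  rcases hq₃cases with h | h | h | h <;> rw [h] at hq₃
  · exact aux_int 13 1 (by norm_num) (by norm_num) (by norm_num) (by norm_num)
      d₁ d₃ hd1 hd3 (by push_cast; linarith [hq₁, hq₃])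
  · exact aux_int 3 7 (by norm_num) (by norm_num) (by norm_num) (by norm_num)
      d₁ d₃ hd1 hd3 (by push_cast; linarith [hq₁, hq₃])
  · exact aux_int 29 1 (by norm_num) (by norm_num) (by norm_num) (by norm_num)
      d₁ d₃ hd1 hd3 (by push_cast; linarith [hq₁, hq₃])
  · exact aux_int 37 1 (by norm_num) (by norm_num) (by norm_num) (by norm_num)
      d₁ d₃ hd1 hd3 (by push_cast; linarith [hq₁, hq₃])
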